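/- For m ≥ 3 let u₀ : B → (0,∞) be continuous, and consider the metric g = u(x,y,z)^{4/(m−2)}·(dx² + φ*g^B + x²g^F) where u(x,y,z) = u₀(y) + O(x) as x → 0. Then under the change of radial variable x̃ = u₀(y)^{2/(m−2)}·x, one has u^{4/(m−2)}·(dx² + φ*g^B + x²g^F) = dx̃² + φ*(u₀^{4/(m−2)}·g^B) + x̃²·g^F + O(x), i.e., the conformally transformed metric is again an incomplete edge metric with base metric u₀^{4/(m−2)}g^B and the same fiber metric g^F. -/
import Mathlib

lemma rpow_lip {c₁ c₂ p : ℝ} (hc₁ : 0 < c₁) (hp : 0 < p) {a b : ℝ}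
    (ha : a ∈ Set.Icc c₁ c₂) (hb : b ∈ Set.Icc c₁ c₂) :
    |a ^ p - b ^ p| ≤ (p * c₂ ^ p / c₁) * |a - b| := by
  have hderiv : ∀ t ∈ Set.Icc c₁ c₂,
      HasDerivWithinAt (fun s : ℝ => s ^ p) (p * t ^ (p - 1)) (Set.Icc c₁ c₂) t := by
    intro t ht
    exact (Real.hasDerivAt_rpow_const (Or.inl (ne_of_gt (lt_of_lt_of_le hc₁ ht.1)))).hasDerivWithinAt
  have hbound : ∀ t ∈ Set.Icc c₁ c₂, ‖p * t ^ (p - 1)‖ ≤ p * c₂ ^ p / c₁ := by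
    intro t ht
    have htpos : 0 < t := lt_of_lt_of_le hc₁ ht.1
    have h1 : t ^ (p - 1) = t ^ p / t := by
      rw [Real.rpow_sub htpos, Real.rpow_one]
    have h2 : t ^ p ≤ c₂ ^ p := Real.rpow_le_rpow htpos.le ht.2 hp.le
    have h3 : t ^ p / t ≤ c₂ ^ p / c₁ := by
      apply div_le_div₀ (Real.rpow_nonneg (le_trans hc₁.le (le_trans ht.1 ht.2)) p) h2 hc₁ ht.1
    rw [Real.norm_eq_abs, abs_mul, abs_of_pos hp,
      abs_of_nonneg (Real.rpow_nonneg htpos.le _), h1, mul_div_assoc]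
    exact mul_le_mul_of_nonneg_left h3 hp.le
  have := (convex_Icc c₁ c₂).norm_image_sub_le_of_norm_hasDerivWithin_le hderiv hbound hb ha
  simpa [Real.norm_eq_abs] using this

/-- Invariance of the edge structure under conformal transformation: if
`u(x,y,z) = u₀(y) + O(x)` with `u, u₀` bounded between positive constants, then,
evaluating the metrics on tangent data `(vx, qB, qF)` (with `qB = g^B(v,v) ≥ 0`,
`qF = g^F(v,v) ≥ 0`), the conformally transformed metric
`u^{4/(m−2)}(dx² + φ*g^B + x² g^F)` agrees, after the change of radial variable
`x̃ = u₀^{2/(m−2)} x`, with `dx̃² + φ*(u₀^{4/(m−2)} g^B) + x̃² g^F` up to `O(x)`. -/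
theorem stmt_19 {B F : Type*} (m : ℝ) (hm : 3 ≤ m)
    (u₀ : B → ℝ) (u : ℝ → B → F → ℝ) (c₁ c₂ : ℝ) (hc₁ : 0 < c₁)
    (hu₀ : ∀ y, c₁ ≤ u₀ y ∧ u₀ y ≤ c₂)
    (hu : ∀ x ∈ Set.Icc (0:ℝ) 1, ∀ y z, c₁ ≤ u x y z ∧ u x y z ≤ c₂)
    (Cexp : ℝ)
    (hexp : ∀ x ∈ Set.Icc (0:ℝ) 1, ∀ y z, |u x y z - u₀ y| ≤ Cexp * x) :
    ∃ C' : ℝ, ∀ x ∈ Set.Icc (0:ℝ) 1, ∀ y z, ∀ vx qB qF : ℝ,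
      0 ≤ qB → 0 ≤ qF →
      |u x y z ^ (4 / (m - 2)) * (vx ^ 2 + qB + x ^ 2 * qF) -
        ((u₀ y ^ (2 / (m - 2)) * vx) ^ 2 + u₀ y ^ (4 / (m - 2)) * qB +
          (u₀ y ^ (2 / (m - 2)) * x) ^ 2 * qF)| ≤
        C' * x * (vx ^ 2 + qB + qF) := by
  set p : ℝ := 4 / (m - 2) with hpdef
  have hm2 : 0 < m - 2 := by linarith
  have hp : 0 < p := by positivity
  set L : ℝ := p * (max c₂ c₁) ^ p / c₁ with hLdef
  have hc₂' : 0 < max c₂ c₁ := lt_max_of_lt_right hc₁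
  have hL : 0 ≤ L := by
    rw [hLdef]
    positivity
  refine ⟨L * Cexp, ?_⟩
  intro x hx y z vx qB qF hqB hqF
  have hu0y : 0 < u₀ y := lt_of_lt_of_le hc₁ (hu₀ y).1
  have hsq : (u₀ y ^ (2 / (m - 2))) ^ 2 = u₀ y ^ p := by
    rw [← Real.rpow_natCast (u₀ y ^ (2 / (m - 2))) 2, ← Real.rpow_mul hu0y.le]
    norm_num
    rw [hpdef]
    ring_nf
  have key : u x y z ^ p * (vx ^ 2 + qB + x ^ 2 * qF) -
      ((u₀ y ^ (2 / (m - 2)) * vx) ^ 2 + u₀ y ^ p * qB +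
        (u₀ y ^ (2 / (m - 2)) * x) ^ 2 * qF)
      = (u x y z ^ p - u₀ y ^ p) * (vx ^ 2 + qB + x ^ 2 * qF) := by
    rw [mul_pow, mul_pow, hsq]; ring
  rw [key, abs_mul]
  have hS : |vx ^ 2 + qB + x ^ 2 * qF| ≤ vx ^ 2 + qB + qF := by
    rw [abs_of_nonneg (by positivity)]
    have hx2 : x ^ 2 ≤ 1 := by nlinarith [hx.1, hx.2]
    have : x ^ 2 * qF ≤ qF := by nlinarith [mul_le_mul_of_nonneg_right hx2 hqF]
    linarith
  have hlip := rpow_lip (c₂ := max c₂ c₁) hc₁ hp (Set.mem_Icc.2 ⟨(hu x hx y z).1, le_max_of_le_left (hu x hx y z).2⟩) (Set.mem_Icc.2 ⟨(hu₀ y).1, le_max_of_le_left (hu₀ y).2⟩)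
  have hCx : 0 ≤ Cexp * x := le_trans (abs_nonneg _) (hexp x hx y z)
  have h1 : |u x y z ^ p - u₀ y ^ p| ≤ L * (Cexp * x) :=
    le_trans hlip (mul_le_mul_of_nonneg_left (hexp x hx y z) hL)
  calc |u x y z ^ p - u₀ y ^ p| * |vx ^ 2 + qB + x ^ 2 * qF|
      ≤ (L * (Cexp * x)) * (vx ^ 2 + qB + qF) := by
        apply mul_le_mul h1 hS (abs_nonneg _) (by positivity)
    _ = L * Cexp * x * (vx ^ 2 + qB + qF) := by ring
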